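/- Let k be an arbitrary field, let A be a finitely generated k-algebra, let X = Spec(A), let φ: X → X be a morphism of affine k-schemes (given on points by φ(𝔭) = Φ⁻¹(𝔭) for a k-algebra homomorphism Φ: A → A), let α ∈ X be a point (a prime ideal of A, not necessarily closed), and let V = V(𝔞) be a Zariski-closed subset of X. If the set {n ∈ ℕ : φⁿ(α) ∈ V} contains no infinite arithmetic progression, then it has Banach density zero. -/

import Mathlib

/-- A set `S ⊆ ℕ` has Banach density zero: for every `ε > 0` there exists `N` such that
`|S ∩ I| ≤ ε·|I|` for every interval `I ⊆ ℕ` of length at least `N`. -/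
def BanachDensityZero (S : Set ℕ) : Prop :=
  ∀ ε : ℝ, 0 < ε → ∃ N : ℕ, ∀ a n : ℕ, N ≤ n →
    (Nat.card ↥(S ∩ Set.Ico a (a + n)) : ℝ) ≤ ε * n

/-- Combinatorial core: if for every `d ≥ 1` the set of `n` with `n, n + d ∈ S` has
Banach density zero, then `S` has Banach density zero. -/
lemma key_lemma (S : Set ℕ)
    (h : ∀ d : ℕ, 1 ≤ d → BanachDensityZero {n : ℕ | n ∈ S ∧ n + d ∈ S}) :
    BanachDensityZero S := by
  classical
  intro ε hε
  set D : ℕ := ⌈(4:ℝ)/ε⌉₊ with hDdef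
  have hDpos : 0 < D := Nat.ceil_pos.mpr (by positivity)
  have hDR : (4:ℝ)/ε ≤ D := Nat.le_ceil _
  have hε' : 0 < ε / (2*D) := by positivity
  have h' : ∀ d : ℕ, ∃ N : ℕ, 1 ≤ d → ∀ a n : ℕ, N ≤ n →
      (Nat.card ↥({m : ℕ | m ∈ S ∧ m + d ∈ S} ∩ Set.Ico a (a+n)) : ℝ) ≤ (ε/(2*D)) * n := by
    intro d
    by_cases hd : 1 ≤ d
    · obtain ⟨N, hN⟩ := h d hd (ε/(2*D)) hε'
      exact ⟨N, fun _ => hN⟩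
    · exact ⟨0, fun hd' => absurd hd' hd⟩
  choose N hN using h'
  refine ⟨max ((Finset.Icc 1 D).sup N) D, ?_⟩
  intro a n hn
  have hnD : D ≤ n := le_trans (le_max_right _ _) hn
  have hnN : ∀ d ∈ Finset.Icc 1 D, N d ≤ n := fun d hd =>
    le_trans (le_trans (Finset.le_sup hd) (le_max_left _ _)) hn
  set Fi : Finset ℕ := (Finset.Ico a (a+n)).filter (· ∈ S) with hFi
  have hcoe : S ∩ Set.Ico a (a+n) = ↑Fi := by
    ext x; simp [hFi, and_comm]
  rw [hcoe, Nat.card_coe_set_eq, Set.ncard_coe_finset]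
  set G : Finset ℕ := Fi.filter (fun s => ∀ j ∈ Finset.Icc 1 D, s + j ∉ S) with hG
  set B : Finset ℕ := Fi.filter (fun s => ∃ j ∈ Finset.Icc 1 D, s + j ∈ S) with hB
  have hsplit : Fi.card ≤ G.card + B.card := by
    have hsub : Fi ⊆ G ∪ B := by
      intro x hx
      by_cases hx' : ∀ j ∈ Finset.Icc 1 D, x + j ∉ S
      · exact Finset.mem_union_left _ (Finset.mem_filter.mpr ⟨hx, hx'⟩)
      · push_neg at hx'
        obtain ⟨j, hj1, hj2⟩ := hx'
        exact Finset.mem_union_right _ (Finset.mem_filter.mpr ⟨hx, ⟨j, hj1, hj2⟩⟩)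
    exact (Finset.card_le_card hsub).trans (Finset.card_union_le _ _)
  -- bound on G : its elements are (D+1)-separated
  have hGcard : G.card ≤ n / (D+1) + 1 := by
    have key : ∀ s ∈ G, ∀ t ∈ G, s < t → ¬ ((s - a)/(D+1) = (t - a)/(D+1)) := by
      intro s hs t ht hlt heq
      have hsF := Finset.mem_filter.mp hs
      have htF := Finset.mem_filter.mp ht
      have hsI := Finset.mem_Ico.mp (Finset.mem_filter.mp hsF.1).1
      have htI := Finset.mem_Ico.mp (Finset.mem_filter.mp htF.1).1
      have htS : t ∈ S := (Finset.mem_filter.mp htF.1).2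
      have hgap : t - s ≤ D := by
        have e1 := Nat.div_add_mod (s-a) (D+1)
        have e2 := Nat.div_add_mod (t-a) (D+1)
        have m2 := Nat.mod_lt (t-a) (show 0 < D+1 by omega)
        rw [← heq] at e2
        have lin : ∀ q r1 r2 u v : ℕ, q + r1 = u → q + r2 = v → r2 < D + 1 →
            u = s - a → v = t - a → t - s ≤ D := by
          intro q r1 r2 u v h1 h2 h3 h4 h5
          omega
        exact lin _ _ _ _ _ e1 e2 m2 rfl rfl
      have : s + (t - s) ∈ S := by rwa [show s + (t-s) = t by omega]
      exact hsF.2 (t - s) (Finset.mem_Icc.mpr ⟨by omega, hgap⟩) this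
    have hle : G.card ≤ (Finset.range (n/(D+1) + 1)).card := by
      apply Finset.card_le_card_of_injOn (fun s => (s - a) / (D+1))
      · intro s hs
        have hs' := Finset.mem_Ico.mp
          (Finset.mem_filter.mp (Finset.mem_filter.mp hs).1).1
        rw [Finset.mem_coe, Finset.mem_range]
        exact Nat.lt_succ_of_le (Nat.div_le_div_right (by omega))
      · intro s hs t ht hst
        rcases lt_trichotomy s t with hc | hc | hc
        · exact absurd hst (key s hs t ht hc)
        · exact hc
        · exact absurd hst.symm (key t ht s hs hc)
    simpa using hle
  -- bound on B
  have hBcard : (B.card : ℝ) ≤ D * ((ε/(2*D)) * n) := by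
    have hsubB : B ⊆ (Finset.Icc 1 D).biUnion (fun d => Fi.filter (fun s => s + d ∈ S)) := by
      intro x hx
      obtain ⟨hxF, j, hj, hjS⟩ := Finset.mem_filter.mp hx
      exact Finset.mem_biUnion.mpr ⟨j, hj, Finset.mem_filter.mpr ⟨hxF, hjS⟩⟩
    have h1 : B.card ≤ ∑ d ∈ Finset.Icc 1 D, (Fi.filter (fun s => s + d ∈ S)).card :=
      (Finset.card_le_card hsubB).trans Finset.card_biUnion_le
    have h2 : ∀ d ∈ Finset.Icc 1 D, ((Fi.filter (fun s => s + d ∈ S)).card : ℝ)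
        ≤ (ε/(2*D)) * n := by
      intro d hd
      have hd1 : 1 ≤ d := (Finset.mem_Icc.mp hd).1
      have hset : {m : ℕ | m ∈ S ∧ m + d ∈ S} ∩ Set.Ico a (a+n)
          = ↑(Fi.filter (fun s => s + d ∈ S)) := by
        ext x
        constructor
        · rintro ⟨⟨hx1, hx2⟩, hx3⟩
          exact Finset.mem_coe.mpr (Finset.mem_filter.mpr
            ⟨Finset.mem_filter.mpr ⟨Finset.mem_Ico.mpr ⟨hx3.1, hx3.2⟩, hx1⟩, hx2⟩)
        · intro hx
          obtain ⟨hx1, hx2⟩ := Finset.mem_filter.mp (Finset.mem_coe.mp hx)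
          obtain ⟨hx3, hx4⟩ := Finset.mem_filter.mp hx1
          have hI := Finset.mem_Ico.mp hx3
          exact ⟨⟨hx4, hx2⟩, hI.1, hI.2⟩
      have hh := hN d hd1 a n (hnN d hd)
      rwa [hset, Nat.card_coe_set_eq, Set.ncard_coe_finset] at hh
    calc (B.card : ℝ) ≤ ∑ d ∈ Finset.Icc 1 D, ((Fi.filter (fun s => s + d ∈ S)).card : ℝ) := by
          exact_mod_cast h1
      _ ≤ ∑ _d ∈ Finset.Icc 1 D, (ε/(2*D)) * n := Finset.sum_le_sum h2
      _ = D * ((ε/(2*D)) * n) := by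
          rw [Finset.sum_const, Nat.card_Icc]
          simp [nsmul_eq_mul]
  -- final arithmetic
  have hc0 : ((n/(D+1) : ℕ) : ℝ) ≤ (n:ℝ)/((D:ℝ)+1) := by
    have := Nat.cast_div_le (α := ℝ) (m := n) (n := D+1)
    push_cast at this
    simpa using this
  have hc1 : ((n/(D+1) : ℕ) : ℝ) ≤ ε * n / 4 := by
    refine hc0.trans ?_
    rw [div_le_div_iff₀ (by positivity) (by norm_num)]
    have h4 : (4:ℝ) ≤ ε * ((D:ℝ)+1) := by
      have h5 : (4:ℝ)/ε ≤ (D:ℝ)+1 := hDR.trans (by linarith)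
      have := mul_le_mul_of_nonneg_left h5 hε.le
      rwa [mul_div_cancel₀ _ (ne_of_gt hε)] at this
    nlinarith [Nat.cast_nonneg (α := ℝ) n]
  have hc2 : (1:ℝ) ≤ ε * n / 4 := by
    have hnD' : (D:ℝ) ≤ (n:ℝ) := by exact_mod_cast hnD
    have h6 : (4:ℝ)/ε ≤ (n:ℝ) := hDR.trans hnD'
    rw [div_le_iff₀ hε] at h6
    linarith
  have hc3 : (D:ℝ) * ((ε/(2*D)) * n) = ε * n / 2 := by
    have : (D:ℝ) ≠ 0 := by positivity
    field_simp
  have hGR : (G.card : ℝ) ≤ ((n/(D+1) : ℕ) : ℝ) + 1 := by exact_mod_cast hGcard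
  have hFR : (Fi.card : ℝ) ≤ (G.card : ℝ) + (B.card : ℝ) := by exact_mod_cast hsplit
  rw [hc3] at hBcard
  linarith

open TopologicalSpace in
/-- Noetherian induction: the dynamical Mordell–Lang/Gignac statement for Noetherian spaces. -/
lemma noeth_aux {X : Type*} [TopologicalSpace X] [NoetherianSpace X]
    (f : X → X) (hf : Continuous f) (α : X) :
    ∀ V : Closeds X,
      (∀ a b : ℕ, 1 ≤ a → ¬ ({n : ℕ | ∃ ℓ : ℕ, n = a * ℓ + b} ⊆ {n : ℕ | f^[n] α ∈ V})) →
      BanachDensityZero {n : ℕ | f^[n] α ∈ V} := by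
  intro V
  induction V using WellFoundedLT.induction with
  | _ V IH =>
    intro hAP
    by_cases hne : ∀ n : ℕ, f^[n] α ∉ V
    · intro ε hε
      refine ⟨0, fun a m _ => ?_⟩
      have hempty : {n : ℕ | f^[n] α ∈ V} ∩ Set.Ico a (a+m) = ∅ := by
        ext x
        simp only [Set.mem_inter_iff, Set.mem_setOf_eq, Set.mem_empty_iff_false, iff_false]
        intro hx
        exact hne x hx.1
      rw [hempty]
      simp only [Nat.card_eq_fintype_card, Set.empty_def]
      norm_num
      positivity
    · push_neg at hne
      obtain ⟨n₀, hn₀⟩ := hne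
      apply key_lemma
      intro d hd
      set V' : Closeds X := ⟨(V : Set X) ∩ f^[d] ⁻¹' (V : Set X),
        V.isClosed.inter (V.isClosed.preimage (hf.iterate d))⟩ with hV'
      have hle : V' ≤ V := fun x hx => hx.1
      have hTd : {m : ℕ | m ∈ {n : ℕ | f^[n] α ∈ V} ∧ m + d ∈ {n : ℕ | f^[n] α ∈ V}}
          = {m : ℕ | f^[m] α ∈ V'} := by
        ext m
        simp only [Set.mem_setOf_eq]
        constructor
        · rintro ⟨h1, h2⟩
          refine ⟨h1, ?_⟩
          rwa [add_comm, Function.iterate_add_apply] at h2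
        · rintro ⟨h1, h2⟩
          refine ⟨h1, ?_⟩
          rwa [add_comm, Function.iterate_add_apply]
      rcases hle.lt_or_eq with hlt | heq
      · rw [hTd]
        apply IH V' hlt
        intro a b ha hsub
        rw [← hTd] at hsub
        exact hAP a b ha (hsub.trans (fun m hm => hm.1))
      · exfalso
        apply hAP d n₀ hd
        rintro m ⟨ℓ, rfl⟩
        have hstep : ∀ x : X, x ∈ V → f^[d] x ∈ V := by
          intro x hx
          have hx' : x ∈ V' := by rw [heq]; exact hx
          exact hx'.2
        show f^[d * ℓ + n₀] α ∈ V
        induction ℓ with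
        | zero => simpa using hn₀
        | succ ℓ ih =>
          have hrw : d * (ℓ+1) + n₀ = d + (d * ℓ + n₀) := by ring
          rw [hrw, Function.iterate_add_apply]
          exact hstep _ ih

theorem banach_density_zero_of_no_arithmetic_progression
    (k A : Type*) [Field k] [CommRing A] [Algebra k A] [Algebra.FiniteType k A]
    (Φ : A →ₐ[k] A) (α : PrimeSpectrum A) (𝔞 : Ideal A)
    (S : Set ℕ)
    (hS : S = {n : ℕ | (PrimeSpectrum.comap Φ.toRingHom)^[n] α ∈
      PrimeSpectrum.zeroLocus (𝔞 : Set A)})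
    (hAP : ∀ a b : ℕ, 1 ≤ a → ¬ ({n : ℕ | ∃ ℓ : ℕ, n = a * ℓ + b} ⊆ S)) :
    BanachDensityZero S := by
  haveI : IsNoetherianRing A := Algebra.FiniteType.isNoetherianRing k A
  subst hS
  exact noeth_aux _ (PrimeSpectrum.continuous_comap Φ.toRingHom) α
    ⟨PrimeSpectrum.zeroLocus (𝔞 : Set A), PrimeSpectrum.isClosed_zeroLocus _⟩ hAP
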